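/- arXiv:2006.06865 — 2 statements merged into one kernel-verified Lean document; each statement's English description precedes it below -/
import Mathlib

section
/- For any directed graph G on vertex set N = {1, …, N}, any partition of N into disjoint groups N_1, …, N_C, any budget I, failure budget J, and fairness level W ∈ [0,1], the following two optimization problems have the same optimal value (with the convention that a supremum over an empty set equals −∞, values taken in ℝ ∪ {−∞}): (P1) the supremum, over x ∈ X satisfying F_{G,c}(x, ξ) ≥ W·|N_c| for every group c and every ξ ∈ Ξ, of min_{ξ ∈ Ξ} Σ_{c} F_{G,c}(x, ξ); and (P2) the supremum over x ∈ X of min_{ξ ∈ Ξ} of the supremum of Σ_{n ∈ N} y_n over all y ∈ {0,1}^N satisfying Σ_{n ∈ N_c} y_n ≥ W·|N_c| for every group c and y_n ≤ Σ_{ν ∈ δ(n)} ξ_ν x_ν for every vertex n. -/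
open Finset
open scoped Classical

/-- Vertex `n` is covered by monitor set `S` under availability `A`: some in-neighbor of
`n` (w.r.t. the directed edge relation `E`, where `E ν n` means `(ν, n) ∈ E`) is a chosen
monitor and is available. -/
def cov {N : ℕ} (E : Fin N → Fin N → Prop) (S A : Finset (Fin N)) (n : Fin N) : Prop :=
  ∃ ν, E ν n ∧ ν ∈ S ∧ ν ∈ A

/-- `F_{G,c}`: the number of covered vertices in the group `grp`. -/
noncomputable def Fgc {N : ℕ} (E : Fin N → Fin N → Prop) (S A : Finset (Fin N))
    (grp : Finset (Fin N)) : ℕ :=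
  (grp.filter (cov E S A)).card

/-- the robust covering problem with fairness constraints (P1) and its
two-stage reformulation with a fictitious counting stage (P2) have the same optimal
value in `ℝ ∪ {−∞}` (formalized in `EReal`; a supremum over an empty set is `⊥ = −∞`).
Monitor choices `x ∈ X` are encoded as finsets `S` with `|S| ≤ I`, availability scenarios
`ξ ∈ Ξ` as finsets `A` with `|univ \ A| ≤ J`, and covering schemes `y ∈ {0,1}^N` as
finsets `Y` (so `∑ n, y n = |Y|`, and `y_n ≤ ∑_{ν ∈ δ(n)} ξ_ν x_ν` means every `n ∈ Y`
is covered). -/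
theorem stmt_1 (N C I J : ℕ) (E : Fin N → Fin N → Prop)
    (groups : Fin C → Finset (Fin N))
    (hdisj : Pairwise fun c c' => Disjoint (groups c) (groups c'))
    (hcover : Finset.univ.biUnion groups = Finset.univ)
    (W : ℝ) (hW0 : 0 ≤ W) (hW1 : W ≤ 1) :
    (⨆ S : {S : Finset (Fin N) // S.card ≤ I ∧
        ∀ A : Finset (Fin N), (Finset.univ \ A).card ≤ J →
          ∀ c, W * (groups c).card ≤ (Fgc E S A (groups c) : ℝ)},
      ⨅ A : {A : Finset (Fin N) // (Finset.univ \ A).card ≤ J},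
        (((∑ c, Fgc E S.1 A.1 (groups c) : ℕ) : ℝ) : EReal)) =
    (⨆ S : {S : Finset (Fin N) // S.card ≤ I},
      ⨅ A : {A : Finset (Fin N) // (Finset.univ \ A).card ≤ J},
        ⨆ Y : {Y : Finset (Fin N) //
            (∀ c, W * (groups c).card ≤ ((Y ∩ groups c).card : ℝ)) ∧
            ∀ n ∈ Y, cov E S.1 A.1 n},
          (((Y.1.card : ℕ) : ℝ) : EReal)) := by
  classical
  have hsum : ∀ S A : Finset (Fin N),
      (∑ c, Fgc E S A (groups c)) = (Finset.univ.filter (cov E S A)).card := by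
    intro S A
    have h1 : (Finset.univ.filter (cov E S A)) =
        Finset.univ.biUnion (fun c => (groups c).filter (cov E S A)) := by
      rw [← hcover, Finset.filter_biUnion]
    rw [h1, Finset.card_biUnion
      (fun c _ c' _ hcc => Finset.disjoint_filter_filter (hdisj hcc))]
    simp [Fgc]
  have key : ∀ (S A : Finset (Fin N)),
      (∀ c, W * (groups c).card ≤ (Fgc E S A (groups c) : ℝ)) →
      (⨆ Y : {Y : Finset (Fin N) //
            (∀ c, W * (groups c).card ≤ ((Y ∩ groups c).card : ℝ)) ∧
            ∀ n ∈ Y, cov E S A n},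
          (((Y.1.card : ℕ) : ℝ) : EReal)) =
      (((∑ c, Fgc E S A (groups c) : ℕ) : ℝ) : EReal) := by
    intro S A hfeas
    set Y₀ := Finset.univ.filter (cov E S A) with hY₀
    have hY₀c : ∀ c, (Y₀ ∩ groups c) = (groups c).filter (cov E S A) := by
      intro c; ext n
      simp only [hY₀, Finset.mem_inter, Finset.mem_filter, Finset.mem_univ, true_and]
      exact and_comm
    apply le_antisymm
    · apply iSup_le
      rintro ⟨Y, hfair, hc⟩
      have hsub : Y ⊆ Y₀ := fun n hn => Finset.mem_filter.2 ⟨Finset.mem_univ n, hc n hn⟩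
      have hle : Y.card ≤ ∑ c, Fgc E S A (groups c) := by
        rw [hsum S A]; exact Finset.card_le_card hsub
      exact EReal.coe_le_coe_iff.2 (by exact_mod_cast hle)
    · refine le_iSup_of_le ⟨Y₀, ?_, ?_⟩ ?_
      · intro c; rw [hY₀c c]; exact hfeas c
      · intro n hn; exact (Finset.mem_filter.1 hn).2
      · apply le_of_eq
        congr 1
        exact_mod_cast congrArg Nat.cast (hsum S A)
  apply le_antisymm
  · apply iSup_le
    rintro ⟨S, hSI, hSfeas⟩
    refine le_iSup_of_le ⟨S, hSI⟩ ?_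
    exact le_of_eq (iInf_congr fun A => (key S A.1 (hSfeas A.1 A.2)).symm)
  · apply iSup_le
    rintro ⟨S, hSI⟩
    by_cases hfeas : ∀ A : Finset (Fin N), (Finset.univ \ A).card ≤ J →
        ∀ c, W * (groups c).card ≤ (Fgc E S A (groups c) : ℝ)
    · refine le_iSup_of_le ⟨S, hSI, hfeas⟩ ?_
      exact le_of_eq (iInf_congr fun A => key S A.1 (hfeas A.1 A.2))
    · push_neg at hfeas
      obtain ⟨A, hA, c, hc⟩ := hfeas
      refine le_trans (iInf_le _ ⟨A, hA⟩) ?_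
      have hemp : IsEmpty {Y : Finset (Fin N) //
          (∀ c, W * (groups c).card ≤ ((Y ∩ groups c).card : ℝ)) ∧
          ∀ n ∈ Y, cov E S A n} := by
        constructor
        rintro ⟨Y, hfair, hcv⟩
        have hsub : Y ∩ groups c ⊆ (groups c).filter (cov E S A) := by
          intro n hn
          have := Finset.mem_inter.1 hn
          exact Finset.mem_filter.2 ⟨this.2, hcv n this.1⟩
        have : ((Y ∩ groups c).card : ℝ) ≤ (Fgc E S A (groups c) : ℝ) := by
          exact_mod_cast Finset.card_le_card hsub
        exact absurd (le_trans (hfair c) this) (not_le.2 hc)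
      rw [iSup_of_empty]
      exact bot_le
end

section
/- Suppose T ⊆ ℝ^N is upward closed, i.e., for all ξ ∈ T ∩ [0,1]^N and all ξ′ ∈ [0,1]^N with ξ′ ≥ ξ componentwise, ξ′ ∈ T. Then for every x ∈ {0,1}^N, every K-tuple y = (y^1, …, y^K) of vectors in {0,1}^N, and every ℓ ∈ L = {0, 1, …, N}^K, the integral parameterized uncertainty set Ξ(x, y, ℓ) is empty if and only if the relaxed set Ξ̄(x, y, ℓ) is empty. Consequently, the partitioned K-adaptability problem — maximize over x ∈ X and y^1, …, y^K ∈ Y the value min over ℓ ∈ L and ξ ∈ Ξ(x, y, ℓ) of max over k with ℓ_k = 0 of Σ_{n ∈ N} y^k_n — has the same optimal value when Ξ(x, y, ℓ) is replaced by Ξ̄(x, y, ℓ) throughout (with the conventions that a maximum over an empty index set is −∞ and a minimum over an empty domain is +∞). -/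
open Finset
open scoped Classical

noncomputable section

/-- The polyhedron `T = {ξ ∈ ℝ^N : Aξ ≥ b}`. -/
def TSet {N R : ℕ} (A : Fin R → Fin N → ℝ) (b : Fin R → ℝ) : Set (Fin N → ℝ) :=
  {ξ | ∀ r, b r ≤ ∑ n, A r n * ξ n}

/-- The integral parameterized uncertainty set `Ξ(x, y, ℓ)`. The index vector
`ℓ ∈ {0, 1, …, N}^K` is encoded as `ℓ : Fin K → Option (Fin N)` (`none` plays the role of
the value `0`); `E ν n` means there is a directed edge `(ν, n)`, so `δ(n) = {ν : E ν n}`. -/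
def XiInt {N R K : ℕ} (E : Fin N → Fin N → Prop)
    (A : Fin R → Fin N → ℝ) (b : Fin R → ℝ)
    (x : Fin N → ℝ) (y : Fin K → Fin N → ℝ) (ℓ : Fin K → Option (Fin N)) :
    Set (Fin N → ℝ) :=
  {ξ | (∀ n, ξ n = 0 ∨ ξ n = 1) ∧ ξ ∈ TSet A b ∧
    (∀ k, ∀ m, ℓ k = some m →
      (∑ ν ∈ Finset.univ.filter (fun ν => E ν m), ξ ν * x ν) + 1 ≤ y k m) ∧
    (∀ k, ℓ k = none → ∀ n,
      y k n ≤ ∑ ν ∈ Finset.univ.filter (fun ν => E ν n), ξ ν * x ν)}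

/-- The relaxed parameterized uncertainty set `Ξ̄(x, y, ℓ)`, where `ξ` ranges over
`[0,1]^N ∩ T` instead of `{0,1}^N ∩ T`. -/
def XiRel {N R K : ℕ} (E : Fin N → Fin N → Prop)
    (A : Fin R → Fin N → ℝ) (b : Fin R → ℝ)
    (x : Fin N → ℝ) (y : Fin K → Fin N → ℝ) (ℓ : Fin K → Option (Fin N)) :
    Set (Fin N → ℝ) :=
  {ξ | (∀ n, 0 ≤ ξ n ∧ ξ n ≤ 1) ∧ ξ ∈ TSet A b ∧
    (∀ k, ∀ m, ℓ k = some m →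
      (∑ ν ∈ Finset.univ.filter (fun ν => E ν m), ξ ν * x ν) + 1 ≤ y k m) ∧
    (∀ k, ℓ k = none → ∀ n,
      y k n ≤ ∑ ν ∈ Finset.univ.filter (fun ν => E ν n), ξ ν * x ν)}

/-- The optimal value (in `EReal`) of the partitioned K-adaptability problem with
parameterized uncertainty sets `Ξsel`: maximize over binary `x ∈ X` and binary
`y¹, …, y^K ∈ Y` the value `min_{ℓ ∈ L} min_{ξ ∈ Ξsel(x,y,ℓ)} max_{k : ℓ_k = 0} ∑_n y^k_n`
(maximum over an empty index set is `⊥ = −∞`, minimum over an empty domain is `⊤ = +∞`,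
supremum over an empty feasible region is `⊥ = −∞`). -/
def kAdaptVal {N K : ℕ}
    (Ξsel : (Fin N → ℝ) → (Fin K → Fin N → ℝ) → (Fin K → Option (Fin N)) → Set (Fin N → ℝ))
    (I : ℕ) {C : ℕ} (groups : Fin C → Finset (Fin N)) (W : ℝ) : EReal :=
  ⨆ x : {x : Fin N → ℝ // (∀ n, x n = 0 ∨ x n = 1) ∧ (∑ n, x n) ≤ I},
  ⨆ y : {y : Fin K → Fin N → ℝ // ∀ k, (∀ n, y k n = 0 ∨ y k n = 1) ∧
      ∀ c, W * (groups c).card ≤ ∑ n ∈ groups c, y k n},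
  ⨅ ℓ : Fin K → Option (Fin N),
  ⨅ _ : (Ξsel x.1 y.1 ℓ),
  ⨆ k : {k : Fin K // ℓ k = none}, (((∑ n, y.1 k.1 n : ℝ)) : EReal)

/-- if the polyhedron `T` is upward closed (within `[0,1]^N`), then for all
binary `x`, `y` and every `ℓ`, the integral set `Ξ(x,y,ℓ)` is empty iff the relaxed set
`Ξ̄(x,y,ℓ)` is empty; consequently the partitioned K-adaptability problem has the same
optimal value with `Ξ` replaced by `Ξ̄` throughout. -/
theorem stmt_3 (N R K I C : ℕ) (E : Fin N → Fin N → Prop)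
    (A : Fin R → Fin N → ℝ) (b : Fin R → ℝ)
    (groups : Fin C → Finset (Fin N)) (W : ℝ)
    (hup : ∀ ξ ∈ TSet A b, (∀ n, 0 ≤ ξ n ∧ ξ n ≤ 1) →
      ∀ ξ' : Fin N → ℝ, (∀ n, 0 ≤ ξ' n ∧ ξ' n ≤ 1) → (∀ n, ξ n ≤ ξ' n) →
        ξ' ∈ TSet A b) :
    (∀ (x : Fin N → ℝ) (y : Fin K → Fin N → ℝ) (ℓ : Fin K → Option (Fin N)),
      (∀ n, x n = 0 ∨ x n = 1) → (∀ k n, y k n = 0 ∨ y k n = 1) →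
      (XiInt E A b x y ℓ = ∅ ↔ XiRel E A b x y ℓ = ∅)) ∧
    kAdaptVal (XiInt (K := K) E A b) I groups W =
      kAdaptVal (XiRel (K := K) E A b) I groups W := by
  have key : ∀ (x : Fin N → ℝ) (y : Fin K → Fin N → ℝ) (ℓ : Fin K → Option (Fin N)),
      (∀ n, x n = 0 ∨ x n = 1) → (∀ k n, y k n = 0 ∨ y k n = 1) →
      (XiInt E A b x y ℓ = ∅ ↔ XiRel E A b x y ℓ = ∅) := by
    intro x y ℓ hx hy
    have hxnn : ∀ n, 0 ≤ x n := by
      intro n; rcases hx n with h | h <;> rw [h] <;> norm_num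
    constructor
    · intro h
      rw [← Set.not_nonempty_iff_eq_empty] at h ⊢
      intro ⟨ξ, hbox, hT, hsome, hnone⟩
      apply h
      set ξ' : Fin N → ℝ := fun n => if ξ n = 0 then 0 else 1 with hξ'def
      have hbox' : ∀ n, 0 ≤ ξ' n ∧ ξ' n ≤ 1 := by
        intro n; simp only [ξ']; split <;> norm_num
      have h01 : ∀ n, ξ' n = 0 ∨ ξ' n = 1 := by
        intro n; simp only [ξ']; split
        · exact Or.inl rfl
        · exact Or.inr rfl
      have hle : ∀ n, ξ n ≤ ξ' n := by
        intro n; simp only [ξ']; split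
        · simp_all
        · exact (hbox n).2
      refine ⟨ξ', h01, hup ξ hT hbox ξ' hbox' hle, ?_, ?_⟩
      · intro k m hk
        have hs := hsome k m hk
        have hym : y k m ≤ 1 := by
          rcases hy k m with h | h <;> rw [h] <;> norm_num
        have hsum0 : ∑ ν ∈ Finset.univ.filter (fun ν => E ν m), ξ ν * x ν = 0 := by
          have hle0 : ∑ ν ∈ Finset.univ.filter (fun ν => E ν m), ξ ν * x ν ≤ 0 := by
            linarith
          have hge0 : 0 ≤ ∑ ν ∈ Finset.univ.filter (fun ν => E ν m), ξ ν * x ν :=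
            Finset.sum_nonneg fun ν _ => mul_nonneg (hbox ν).1 (hxnn ν)
          linarith
        have hterm := (Finset.sum_eq_zero_iff_of_nonneg
          (fun ν _ => mul_nonneg (hbox ν).1 (hxnn ν))).mp hsum0
        have hsum0' : ∑ ν ∈ Finset.univ.filter (fun ν => E ν m), ξ' ν * x ν = 0 := by
          apply Finset.sum_eq_zero
          intro ν hν
          have ht := hterm ν hν
          rcases mul_eq_zero.mp ht with h0 | h0
          · simp [ξ', h0]
          · simp [h0]
        rw [hsum0']
        linarith
      · intro k hk n
        have := hnone k hk n
        have : ∑ ν ∈ Finset.univ.filter (fun ν => E ν n), ξ ν * x ν ≤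
            ∑ ν ∈ Finset.univ.filter (fun ν => E ν n), ξ' ν * x ν :=
          Finset.sum_le_sum fun ν _ => mul_le_mul_of_nonneg_right (hle ν) (hxnn ν)
        linarith [hnone k hk n]
    · intro h
      rw [← Set.not_nonempty_iff_eq_empty] at h ⊢
      intro ⟨ξ, hbox, hT, hsome, hnone⟩
      refine h ⟨ξ, ?_, hT, hsome, hnone⟩
      intro n
      rcases hbox n with h0 | h0 <;> rw [h0] <;> norm_num
  refine ⟨key, ?_⟩
  unfold kAdaptVal
  refine iSup_congr fun x => iSup_congr fun y => iInf_congr fun ℓ => ?_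
  have h := key x.1 y.1 ℓ x.2.1 (fun k => (y.2 k).1)
  by_cases hne : (XiInt E A b x.1 y.1 ℓ).Nonempty
  · have hne' : (XiRel E A b x.1 y.1 ℓ).Nonempty := by
      rw [Set.nonempty_iff_ne_empty] at hne ⊢
      exact fun h' => hne (h.mpr h')
    haveI := hne.to_subtype
    haveI := hne'.to_subtype
    rw [iInf_const, iInf_const]
  · have hne' : ¬ (XiRel E A b x.1 y.1 ℓ).Nonempty := by
      rw [Set.not_nonempty_iff_eq_empty] at hne ⊢
      exact h.mp hne
    rw [Set.not_nonempty_iff_eq_empty] at hne hne'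
    haveI : IsEmpty (XiInt E A b x.1 y.1 ℓ) := by rw [Set.isEmpty_coe_sort]; exact hne
    haveI : IsEmpty (XiRel E A b x.1 y.1 ℓ) := by rw [Set.isEmpty_coe_sort]; exact hne'
    rw [iInf_of_empty, iInf_of_empty]

end
end
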